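/- The operator T_0 defined by (T_0 f)(z) = ((t_0+u_0-z+1/2)(t_0-u_0-z+1/2)/(1-2z))·(f(1-z) - f(z)) + t_0·f(z) satisfies T_0² = t_0²·𝟙 on functions f : ℂ → ℂ (away from z = 1/2). -/

import Mathlib

/-- The operator `T₀` of the degenerate double affine Hecke algebra of type
`(C₁∨, C₁)`. -/
noncomputable def T0op (t0 u0 : ℂ) (f : ℂ → ℂ) : ℂ → ℂ :=
  fun z => (t0 + u0 - z + 1/2) * (t0 - u0 - z + 1/2) / (1 - 2 * z) * (f (1 - z) - f z)
    + t0 * f z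

lemma T0_alg (t0 u0 z a b : ℂ) (h : (1 : ℂ) - 2 * z ≠ 0) :
    (t0 + u0 - z + 1/2) * (t0 - u0 - z + 1/2) / (1 - 2 * z) *
      (((t0 + u0 - (1 - z) + 1/2) * (t0 - u0 - (1 - z) + 1/2) / (1 - 2 * (1 - z)) * (a - b)
          + t0 * b)
        - ((t0 + u0 - z + 1/2) * (t0 - u0 - z + 1/2) / (1 - 2 * z) * (b - a) + t0 * a))
      + t0 * ((t0 + u0 - z + 1/2) * (t0 - u0 - z + 1/2) / (1 - 2 * z) * (b - a) + t0 * a)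
    = t0 ^ 2 * a := by
  have h' : (1 : ℂ) - 2 * (1 - z) ≠ 0 := by
    intro h2; apply h; linear_combination -h2
  rw [show (1:ℂ) - 2 * (1 - z) = -(1 - 2 * z) by ring, div_neg]
  have h3 : (1:ℂ) - z*2 ≠ 0 := by rwa [mul_comm] at h
  field_simp
  ring

/-- `T₀² = t₀² 𝟙` away from `z = 1/2`. -/
theorem T0_sq (t0 u0 : ℂ) (f : ℂ → ℂ) (z : ℂ) (hz : z ≠ 1/2) :
    T0op t0 u0 (T0op t0 u0 f) z = t0 ^ 2 * f z := by
  have h : (1 : ℂ) - 2 * z ≠ 0 := by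
    intro h; apply hz; linear_combination (-1/2 : ℂ) * h
  simp only [T0op]
  rw [show (1:ℂ) - (1 - z) = z by ring]
  exact T0_alg t0 u0 z (f z) (f (1 - z)) h
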